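/- Let 𝒞 be a conic in the real projective plane, given as the zero locus of a nondegenerate quadratic form Q on ℝ³, and let A, B, C be three noncollinear points on 𝒞. Let P be the intersection point of the tangent line to 𝒞 at A with the line BC, let Q' be the intersection point of the tangent line to 𝒞 at B with the line CA, and let R be the intersection point of the tangent line to 𝒞 at C with the line AB. Then P, Q', R are collinear (this line is the Hessian line of ABC with respect to 𝒞). -/

import Mathlib

/-- Three points of the real projective plane are collinear if (some, equivalently any)
homogeneous representatives of them are linearly dependent. -/
def Collin (X Y Z : Projectivization ℝ (Fin 3 → ℝ)) : Prop :=
  ¬ LinearIndependent ℝ ![X.rep, Y.rep, Z.rep]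

/-- A point of the real projective plane lies on the conic cut out by the quadratic form `q`. -/
def OnConic (q : QuadraticForm ℝ (Fin 3 → ℝ)) (X : Projectivization ℝ (Fin 3 → ℝ)) : Prop :=
  q X.rep = 0

private lemma pair_of_triple {a b c : Fin 3 → ℝ} (h : LinearIndependent ℝ ![a, b, c])
    (i j : Fin 3) (hij : i ≠ j) : LinearIndependent ℝ ![![a, b, c] i, ![a, b, c] j] := by
  have hinj : Function.Injective (![i, j] : Fin 2 → Fin 3) := by
    intro x y hxy
    fin_cases x <;> fin_cases y <;> simp_all
  have := h.comp ![i, j] hinj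
  convert this using 1
  funext k; fin_cases k <;> rfl

/-- Extract scalars from linear dependence. -/
private lemma span_coords {u v w : Fin 3 → ℝ} (huv : LinearIndependent ℝ ![u, v])
    (hw : w ≠ 0) (h : ¬ LinearIndependent ℝ ![u, v, w]) :
    ∃ s t : ℝ, w = s • u + t • v := by
  rw [Fintype.not_linearIndependent_iff] at h
  obtain ⟨g, hg, i, hi⟩ := h
  have hsum : g 0 • u + g 1 • v + g 2 • w = 0 := by
    simpa [Fin.sum_univ_three] using hg
  by_cases h2 : g 2 = 0
  · exfalso
    have := Fintype.linearIndependent_iff.mp huv ![g 0, g 1] (by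
      simpa [Fin.sum_univ_two, h2, add_assoc] using hsum)
    fin_cases i
    · exact hi (by simpa using this 0)
    · exact hi (by simpa using this 1)
    · exact hi h2
  · refine ⟨-g 0 / g 2, -g 1 / g 2, ?_⟩
    have hw2 : w = (g 2)⁻¹ • (-(g 0 • u) - g 1 • v) := by
      rw [eq_inv_smul_iff₀ h2]
      linear_combination (norm := module) hsum
    rw [hw2]
    match_scalars <;> field_simp

private lemma polar_ne_zero (q : QuadraticForm ℝ (Fin 3 → ℝ))
    (hq : LinearMap.BilinForm.Nondegenerate (QuadraticMap.polarBilin q))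
    {a b c : Fin 3 → ℝ} (hind : LinearIndependent ℝ ![a, b, c])
    (ha : q a = 0) (hb : q b = 0) : QuadraticMap.polarBilin q a b ≠ 0 := by
  set Bf := QuadraticMap.polarBilin q with hBf
  intro hab
  obtain ⟨bas, hbas⟩ : ∃ bas : Module.Basis (Fin 3) ℝ (Fin 3 → ℝ), ⇑bas = ![a, b, c] :=
    ⟨_, coe_basisOfLinearIndependentOfCardEqFinrank hind (by simp)⟩
  have key : ∀ x : Fin 3 → ℝ, Bf x a = 0 → Bf x b = 0 → Bf x c = 0 → x = 0 := by
    intro x h0 h1 h2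
    apply hq.1 x
    intro n
    have : Bf x = 0 := by
      apply bas.ext
      intro i
      fin_cases i <;> simp [hbas, h0, h1, h2]
    simp [this]
  have haa : Bf a a = 0 := by
    simp [hBf, QuadraticMap.polarBilin_apply_apply, QuadraticMap.polar_self, ha]
  have hbb : Bf b b = 0 := by
    simp [hBf, QuadraticMap.polarBilin_apply_apply, QuadraticMap.polar_self, hb]
  have hba : Bf b a = 0 := by
    simpa [hBf, QuadraticMap.polarBilin_apply_apply, QuadraticMap.polar_comm (⇑q) a b] using hab
  -- v := (Bf a c) • b - (Bf b c) • a is orthogonal to everything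
  have hv : (Bf a c) • b - (Bf b c) • a = 0 := by
    apply key
    · simp [map_sub, map_smul, hba, haa, mul_comm]
    · simp [map_sub, map_smul, hbb, hab]
    · simp [map_sub, map_smul]; ring
  -- hence Bf a c = 0 and Bf b c = 0
  have hpair : LinearIndependent ℝ ![a, b] := pair_of_triple hind 0 1 (by decide)
  have hac : Bf a c = 0 := by
    have := Fintype.linearIndependent_iff.mp hpair ![-(Bf b c), Bf a c] (by
      rw [← hv]; simp [Fin.sum_univ_two]; module)
    simpa using this 1
  have ha0 : a = 0 := key a haa hab hac
  exact hind.ne_zero 0 (by simpa using ha0)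

theorem hessian_line_collinear
    (q : QuadraticForm ℝ (Fin 3 → ℝ))
    (hq : LinearMap.BilinForm.Nondegenerate (QuadraticMap.polarBilin q))
    (A B C : Projectivization ℝ (Fin 3 → ℝ))
    (hA : OnConic q A) (hB : OnConic q B) (hC : OnConic q C)
    (hABC : ¬ Collin A B C)
    (P Q' R : Projectivization ℝ (Fin 3 → ℝ))
    -- `P` is the intersection of the tangent line to the conic at `A` with the line `BC`
    (hP : QuadraticMap.polarBilin q A.rep P.rep = 0 ∧ Collin B C P)
    -- `Q'` is the intersection of the tangent line to the conic at `B` with the line `CA`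
    (hQ' : QuadraticMap.polarBilin q B.rep Q'.rep = 0 ∧ Collin C A Q')
    -- `R` is the intersection of the tangent line to the conic at `C` with the line `AB`
    (hR : QuadraticMap.polarBilin q C.rep R.rep = 0 ∧ Collin A B R) :
    Collin P Q' R := by
  classical
  set Bf := QuadraticMap.polarBilin q with hBf
  set a := A.rep with hadef
  set b := B.rep with hbdef
  set c := C.rep with hcdef
  have hind : LinearIndependent ℝ ![a, b, c] := not_not.mp hABC
  have hindbca : LinearIndependent ℝ ![b, c, a] := by
    have hinj : Function.Injective (![1, 2, 0] : Fin 3 → Fin 3) := by decide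
    have := hind.comp ![1, 2, 0] hinj
    convert this using 1; funext k; fin_cases k <;> rfl
  have hindacb : LinearIndependent ℝ ![a, c, b] := by
    have hinj : Function.Injective (![0, 2, 1] : Fin 3 → Fin 3) := by decide
    have := hind.comp ![0, 2, 1] hinj
    convert this using 1; funext k; fin_cases k <;> rfl
  -- symmetry of Bf
  have hsymm : ∀ x y : Fin 3 → ℝ, Bf x y = Bf y x := by
    intro x y
    simp [hBf, QuadraticMap.polarBilin_apply_apply, QuadraticMap.polar_comm (⇑q) x y]
  -- the three cross polar values, all nonzero
  set d := Bf b c with hd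
  set e := Bf a c with he
  set f := Bf a b with hf
  have hdne : d ≠ 0 := polar_ne_zero q hq hindbca hB hC
  have hene : e ≠ 0 := polar_ne_zero q hq hindacb hA hC
  have hfne : f ≠ 0 := polar_ne_zero q hq hind hA hB
  -- coordinates of P, Q', R
  obtain ⟨y₁, z₁, hPrep⟩ := span_coords (pair_of_triple hind 1 2 (by decide))
    P.rep_nonzero hP.2
  obtain ⟨z₂, x₂, hQrep⟩ := span_coords (pair_of_triple hindbca 1 2 (by decide))
    Q'.rep_nonzero hQ'.2
  obtain ⟨x₃, y₃, hRrep⟩ := span_coords (pair_of_triple hind 0 1 (by decide))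
    R.rep_nonzero hR.2
  simp only [Matrix.cons_val_zero, Matrix.cons_val_one, Matrix.head_cons,
    Matrix.cons_val_two, Matrix.tail_cons] at hPrep hQrep hRrep
  -- tangent conditions in coordinates
  have h1 : y₁ * f + z₁ * e = 0 := by
    have h := hP.1
    rw [hPrep, map_add, map_smul, map_smul] at h
    rw [hf, he]
    simpa [smul_eq_mul] using h
  have h2 : x₂ * f + z₂ * d = 0 := by
    have h := hQ'.1
    rw [hQrep, map_add, map_smul, map_smul] at h
    rw [hf, hd, hsymm a b]
    simp only [smul_eq_mul] at h
    linarith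
  have h3 : x₃ * e + y₃ * d = 0 := by
    have h := hR.1
    rw [hRrep, map_add, map_smul, map_smul] at h
    rw [he, hd, hsymm a c, hsymm b c]
    simp only [smul_eq_mul] at h
    linarith
  -- z₂ and y₃ are nonzero
  have hz₂ : z₂ ≠ 0 := by
    intro h0
    have h2' := h2
    rw [h0, zero_mul, add_zero] at h2'
    have hx₂ : x₂ = 0 := (mul_eq_zero.mp h2').resolve_right hfne
    exact Q'.rep_nonzero (by rw [hQrep, h0, hx₂]; simp)
  have hy₃ : y₃ ≠ 0 := by
    intro h0
    have h3' := h3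
    rw [h0, zero_mul, add_zero] at h3'
    have hx₃ : x₃ = 0 := (mul_eq_zero.mp h3').resolve_right hene
    exact R.rep_nonzero (by rw [hRrep, h0, hx₃]; simp)
  -- determinant identity
  have hdet : y₁ * z₂ * x₃ + z₁ * x₂ * y₃ = 0 := by
    have hkey : (y₁ * z₂ * x₃ + z₁ * x₂ * y₃) * (d * e * f) = 0 := by
      linear_combination (z₂ * x₃ * d * e) * h1 + (z₁ * e * d * y₃) * h2 - (z₁ * e * d * z₂) * h3
    have hdef : d * e * f ≠ 0 := mul_ne_zero (mul_ne_zero hdne hene) hfne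
    exact (mul_eq_zero.mp hkey).resolve_right hdef
  -- exhibit the dependence
  rw [Collin, Fintype.not_linearIndependent_iff]
  refine ⟨![z₂ * y₃, -(z₁ * y₃), -(z₂ * y₁)], ?_, ⟨0, by simpa using mul_ne_zero hz₂ hy₃⟩⟩
  rw [Fin.sum_univ_three]
  simp only [Matrix.cons_val_zero, Matrix.cons_val_one, Matrix.head_cons,
    Matrix.cons_val_two, Matrix.tail_cons]
  rw [hPrep, hQrep, hRrep]
  match_scalars <;> ring_nf
  linarith [hdet]
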